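/- For every positive integer m, with E_m = {z ∈ ℂ : |z^m − 1| = 1}, the minimal sup-norms of monic polynomials on E_m tend to 1: writing t(n) = inf over all monic complex polynomials P of degree n of sup_{z ∈ E_m} |P(z)|, one has lim_{n→∞} t(n) = 1. -/

import Mathlib

open Polynomial Filter Complex

lemma multiset_finset_prod_comm {β γ : Type*} [CommMonoid γ] (t : Multiset β)
    (s : Finset ℕ) (f : ℕ → β → γ) :
    ∏ j ∈ s, (t.map (f j)).prod = (t.map (fun b => ∏ j ∈ s, f j b)).prod := by
  induction t using Multiset.induction with
  | empty => simp
  | cons a t ih => simp [Finset.prod_mul_distrib, ih]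

lemma dft_lemma (n : ℕ) (ω : ℂ) (hω : IsPrimitiveRoot ω (n+1)) (B : ℂ[X]) (hB : B.natDegree ≤ n) :
    ∑ k ∈ Finset.range (n+1), B.eval (ω^k) * (ω^k)^(n*n) = (n+1 : ℂ) * B.coeff n := by
  have heval : ∀ x : ℂ, B.eval x = ∑ i ∈ Finset.range (n+1), B.coeff i * x^i := fun x =>
    eval_eq_sum_range' (Nat.lt_succ_of_le hB) x
  calc ∑ k ∈ Finset.range (n+1), B.eval (ω^k) * (ω^k)^(n*n)
      = ∑ k ∈ Finset.range (n+1), ∑ i ∈ Finset.range (n+1),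
          B.coeff i * (ω^(i + n*n))^k := by
        refine Finset.sum_congr rfl fun k _ => ?_
        rw [heval, Finset.sum_mul]
        refine Finset.sum_congr rfl fun i _ => ?_
        ring
    _ = ∑ i ∈ Finset.range (n+1), B.coeff i * ∑ k ∈ Finset.range (n+1), (ω^(i + n*n))^k := by
        rw [Finset.sum_comm]
        simp [Finset.mul_sum]
    _ = (n+1 : ℂ) * B.coeff n := by
        rw [Finset.sum_eq_single n]
        · have h1 : ω ^ (n + n*n) = 1 := by
            have : n + n*n = (n+1)*n := by ring
            rw [this, pow_mul, hω.pow_eq_one, one_pow]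
          rw [h1]
          simp [mul_comm]
        · intro i hi hne
          have hilt : i < n := lt_of_le_of_ne (Nat.lt_succ_iff.mp (Finset.mem_range.mp hi)) hne
          have hx : ω ^ (i + n*n) ≠ 1 := by
            intro h
            have hdvd : (n+1) ∣ (i + n*n) := hω.pow_eq_one_iff_dvd _ |>.mp h
            have h2 : (n+1) ∣ ((n + n*n) - (i + n*n)) := by
              refine Nat.dvd_sub ?_ hdvd
              have : n + n*n = (n+1)*n := by ring
              rw [this]; exact Dvd.intro n rfl
            have h3 : (n + n*n) - (i + n*n) = n - i := by omega
            rw [h3] at h2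
            have := Nat.le_of_dvd (by omega) h2
            omega
          have hz : ∑ k ∈ Finset.range (n+1), (ω^(i + n*n))^k = 0 := by
            have h4 : (ω^(i+n*n))^(n+1) = 1 := by
              rw [← pow_mul, mul_comm (i+n*n), pow_mul, hω.pow_eq_one, one_pow]
            have := geom_sum_eq hx (n+1)
            rw [this, h4, sub_self, zero_div]
          rw [hz, mul_zero]
        · intro h
          exact absurd (Finset.self_mem_range_succ n) h

lemma root_prod_identity (m : ℕ) (hm : 0 < m) (ζ : ℂ) (hζ : IsPrimitiveRoot ζ m) (z ρ : ℂ) :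
    ∏ j ∈ Finset.range m, (ζ^j * z - ρ) = (-1)^m * (ρ^m - z^m) := by
  have key : (X ^ m - C (z ^ m) : ℂ[X]) = ∏ i ∈ Finset.range m, (X - C (ζ ^ i * z)) :=
    X_pow_sub_C_eq_prod hζ hm rfl
  have h2 := congrArg (Polynomial.eval ρ) key
  simp only [eval_sub, eval_pow, eval_X, eval_C, eval_prod] at h2
  calc ∏ j ∈ Finset.range m, (ζ^j * z - ρ)
      = ∏ j ∈ Finset.range m, (-1 : ℂ) * (ρ - ζ^j * z) := by
        refine Finset.prod_congr rfl fun j _ => by ring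
    _ = (-1)^m * ∏ j ∈ Finset.range m, (ρ - ζ^j * z) := by
        rw [Finset.prod_mul_distrib, Finset.prod_const, Finset.card_range]
    _ = (-1)^m * (ρ^m - z^m) := by rw [← h2]

lemma partA (m : ℕ) (hm : 1 ≤ m) (P : ℂ[X]) (hP : P.Monic) (t : ℝ) (ht0 : 0 ≤ t)
    (hub : ∀ z : ℂ, ‖z^m - 1‖ = 1 → ‖P.eval z‖ ≤ t) : 1 ≤ t := by
  set n := P.natDegree with hn
  obtain ⟨ζ, hζ⟩ : ∃ ζ : ℂ, IsPrimitiveRoot ζ m :=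
    ⟨_, Complex.isPrimitiveRoot_exp m (by omega)⟩
  obtain ⟨ω, hω⟩ : ∃ ω : ℂ, IsPrimitiveRoot ω (n+1) :=
    ⟨_, Complex.isPrimitiveRoot_exp (n+1) (by omega)⟩
  have hωnorm : ‖ω‖ = 1 := Complex.norm_eq_one_of_pow_eq_one hω.pow_eq_one (by omega)
  set R := P.roots with hR
  have hsplit : P = (R.map fun a => X - C a).prod :=
    (prod_multiset_X_sub_C_of_monic_of_roots_card_eq hP IsAlgClosed.card_roots_eq_natDegree).symm
  have hcard : R.card = n := IsAlgClosed.card_roots_eq_natDegree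
  set u : ℂ := (-1)^(m*n + n) with hu
  have hunorm : ‖u‖ = 1 := by rw [hu, norm_pow, norm_neg, norm_one, one_pow]
  have hune : u ≠ 0 := by rw [hu]; exact pow_ne_zero _ (by norm_num)
  set M : ℂ[X] := (R.map fun ρ => X - C (ρ^m)).prod with hM
  have hMmonic : M.Monic := by
    rw [hM]
    exact monic_multiset_prod_of_monic _ _ fun f _ => monic_X_sub_C _
  have hMdeg : M.natDegree = n := by
    rw [hM, natDegree_multiset_prod_of_monic]
    · rw [Multiset.map_map,
        show (natDegree ∘ fun ρ : ℂ => X - C (ρ^m)) = fun _ => 1 from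
          funext fun ρ => natDegree_X_sub_C _]
      simp [hcard]
    · intro f hf
      obtain ⟨ρ, _, rfl⟩ := Multiset.mem_map.mp hf
      exact monic_X_sub_C _
  set H : ℂ[X] := C u * M with hH
  have hHdeg : H.natDegree = n := by rw [hH, natDegree_C_mul hune, hMdeg]
  have hHcoeff : H.coeff n = u := by
    rw [hH, coeff_C_mul, ← hMdeg]
    rw [← Polynomial.leadingCoeff]
    rw [hMmonic.leadingCoeff, mul_one]
  -- evaluation of P as product over roots
  have hPeval : ∀ x : ℂ, P.eval x = (R.map fun a => x - a).prod := by
    intro x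
    conv_lhs => rw [hsplit]
    rw [eval_multiset_prod, Multiset.map_map]
    simp
  -- key pointwise identity
  have KPI : ∀ z : ℂ, ∏ j ∈ Finset.range m, P.eval (ζ^j * z) = H.eval (z^m) := by
    intro z
    have h1 : ∏ j ∈ Finset.range m, P.eval (ζ^j * z)
        = (R.map fun ρ => ∏ j ∈ Finset.range m, (ζ^j * z - ρ)).prod := by
      rw [← multiset_finset_prod_comm]
      exact Finset.prod_congr rfl fun j _ => hPeval _
    rw [h1]
    have h2 : (R.map fun ρ => ∏ j ∈ Finset.range m, (ζ^j * z - ρ)).prod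
        = (R.map fun ρ => ((-1:ℂ)^(m+1)) * (z^m - ρ^m)).prod := by
      congr 1
      refine Multiset.map_congr rfl fun ρ _ => ?_
      rw [root_prod_identity m (by omega) ζ hζ z ρ]
      ring
    rw [h2]
    have h3 : (R.map fun ρ => ((-1:ℂ)^(m+1)) * (z^m - ρ^m)).prod
        = ((-1:ℂ)^(m+1))^n * (R.map fun ρ => z^m - ρ^m).prod := by
      rw [show (fun ρ : ℂ => ((-1:ℂ)^(m+1)) * (z^m - ρ^m))
          = fun ρ : ℂ => (fun _ => ((-1:ℂ)^(m+1))) ρ * (fun ρ => z^m - ρ^m) ρ from rfl]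
      rw [Multiset.prod_map_mul]
      congr 1
      rw [Multiset.map_const', Multiset.prod_replicate, hcard]
    rw [h3, hH, eval_mul, eval_C, hM, eval_multiset_prod, Multiset.map_map]
    have h4 : ((-1:ℂ)^(m+1))^n = u := by rw [hu, ← pow_mul]; ring
    rw [h4]
    exact congrArg (fun s : Multiset ℂ => u * s.prod)
      (Multiset.map_congr rfl fun ρ _ => by simp)
  -- bound on H at points 1 + ω^k
  have hHbound : ∀ k : ℕ, ‖H.eval (1 + ω^k)‖ ≤ t^m := by
    intro k
    obtain ⟨z, hz⟩ := IsAlgClosed.exists_pow_nat_eq (1 + ω^k) (show 0 < m by omega)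
    rw [← hz, ← KPI z]
    rw [norm_prod]
    calc ∏ j ∈ Finset.range m, ‖P.eval (ζ^j * z)‖
        ≤ ∏ _j ∈ Finset.range m, t := by
          refine Finset.prod_le_prod (fun _ _ => norm_nonneg _) fun j _ => ?_
          apply hub
          have : (ζ^j * z)^m = z^m := by
            rw [mul_pow, ← pow_mul, mul_comm j m, pow_mul, hζ.pow_eq_one, one_pow, one_mul]
          rw [this, hz]
          simp [norm_pow, hωnorm]
      _ = t^m := by rw [Finset.prod_const, Finset.card_range]
  -- DFT extraction on B = H.comp (X + C 1)
  set B : ℂ[X] := H.comp (X + C 1) with hB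
  have hBdeg : B.natDegree = n := by
    rw [hB, natDegree_comp, natDegree_X_add_C, mul_one, hHdeg]
  have hBcoeff : B.coeff n = u := by
    have h5 : B.leadingCoeff = H.leadingCoeff := by
      rw [hB, leadingCoeff_comp (by rw [natDegree_X_add_C]; omega),
        (monic_X_add_C (1:ℂ)).leadingCoeff, one_pow, mul_one]
    rw [← hBdeg] at *
    rw [← Polynomial.leadingCoeff, h5, Polynomial.leadingCoeff, hHdeg, hHcoeff]
  have hdft := dft_lemma n ω hω B (le_of_eq hBdeg)
  have hnorm1 : (n+1 : ℝ) ≤ (n+1 : ℝ) * t^m := by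
    have hLHS : ‖(n+1 : ℂ) * B.coeff n‖ = (n+1 : ℝ) := by
      rw [hBcoeff, norm_mul, hunorm, mul_one,
        show ((n:ℂ)+1) = ((n+1:ℕ):ℂ) by push_cast; ring, Complex.norm_natCast]
      push_cast
      ring
    calc (n+1 : ℝ) = ‖∑ k ∈ Finset.range (n+1), B.eval (ω^k) * (ω^k)^(n*n)‖ := by
          rw [hdft, hLHS]
      _ ≤ ∑ k ∈ Finset.range (n+1), ‖B.eval (ω^k) * (ω^k)^(n*n)‖ := norm_sum_le _ _
      _ ≤ ∑ _k ∈ Finset.range (n+1), t^m := by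
          refine Finset.sum_le_sum fun k _ => ?_
          rw [norm_mul, norm_pow, norm_pow, hωnorm]
          simp only [one_pow, mul_one]
          have : B.eval (ω^k) = H.eval (1 + ω^k) := by
            rw [hB, eval_comp]
            simp [add_comm]
          rw [this]
          exact hHbound k
      _ = (n+1 : ℝ) * t^m := by
          rw [Finset.sum_const, Finset.card_range]
          simp [nsmul_eq_mul]
  have htm : 1 ≤ t^m := by
    have hpos : (0:ℝ) < n+1 := by positivity
    nlinarith
  by_contra hlt
  push_neg at hlt
  have := pow_lt_one₀ ht0 hlt (by omega : m ≠ 0)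
  linarith

lemma scalar_ineq (d c : ℝ) (hd0 : 0 < d) (hd14 : d ≤ 1/4) (hc : |c| ≤ 1) :
    2 + 2*c ≤ ((1+d)^2) * (1 + 2*(1-d)*c + (1-d)^2) := by
  have hc' := abs_le.mp hc
  nlinarith [sq_nonneg (d*(1+d)),
    mul_nonneg (mul_nonneg hd0.le (show (0:ℝ) ≤ 1 - d - d^2 by nlinarith))
      (show (0:ℝ) ≤ 1 + c by linarith [hc'.1])]

lemma partB_weight (α : ℝ) (h0 : 0 ≤ α) (h1 : α ≤ 1) (ε : ℝ) (hε : 0 < ε) :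
    ∃ (K : ℕ) (c : ℕ → ℂ), c 0 = 1 ∧ ∀ u : ℂ, ‖u‖ = 1 →
      ‖∑ k ∈ Finset.range (K+1), c k * u^k‖ * ‖1+u‖ ^ α ≤ 1 + ε := by
  set d : ℝ := min ε 1 / 4 with hd
  have hd0 : 0 < d := by positivity
  have hd14 : d ≤ 1/4 := by
    rw [hd]; have := min_le_right ε 1; linarith
  have hd3ε : 3 * d ≤ ε := by
    rw [hd]
    rcases le_total ε 1 with h | h
    · rw [min_eq_left h]; linarith
    · rw [min_eq_right h]; linarith
  set β : ℝ := 1 - d with hβ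
  have hβpos : 0 < β := by rw [hβ]; linarith
  have hβ1 : β < 1 := by rw [hβ]; linarith
  set b : ℝ := 1/β with hb
  have hb1 : 1 < b := by
    rw [hb, lt_div_iff₀ hβpos]; linarith
  set f : ℂ → ℂ := fun u => (1 + (β:ℂ) * u) ^ (-(α:ℂ)) with hf
  have hbase : ∀ u : ℂ, ‖u‖ < b → 0 < (1 + (β:ℂ) * u).re := by
    intro u hu
    have h2 : ‖(β:ℂ) * u‖ < 1 := by
      rw [norm_mul, Complex.norm_real, Real.norm_eq_abs, abs_of_pos hβpos]
      calc β * ‖u‖ < β * b := mul_lt_mul_of_pos_left hu hβpos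
        _ = 1 := by rw [hb]; field_simp
    have h3 : |((β:ℂ) * u).re| ≤ ‖(β:ℂ) * u‖ := Complex.abs_re_le_norm _
    have h4 := abs_lt.mp (lt_of_le_of_lt h3 h2)
    simp only [Complex.add_re, Complex.one_re]
    linarith [h4.1]
  set Rc : NNReal := ⟨(1+b)/2, by positivity⟩ with hRc
  have hRc1 : (1:ℝ) < (Rc : ℝ) := by show (1:ℝ) < (1+b)/2; linarith
  have hRcb : (Rc : ℝ) < b := by show (1+b)/2 < b; linarith
  have hdiff : DifferentiableOn ℂ f (Metric.closedBall (0:ℂ) Rc) := by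
    intro u hu
    have hu' : ‖u‖ < b := by
      rw [Metric.mem_closedBall, dist_zero_right] at hu
      exact lt_of_le_of_lt hu hRcb
    have hslit : (1 + (β:ℂ) * u) ∈ Complex.slitPlane := Or.inl (hbase u hu')
    apply DifferentiableAt.differentiableWithinAt
    have hd1 : HasDerivAt (fun w : ℂ => 1 + (β:ℂ)*w) ((β:ℂ)) u := by
      simpa using ((hasDerivAt_id u).const_mul ((β:ℂ))).const_add (1:ℂ)
    exact (hd1.cpow_const hslit).differentiableAt
  have hps : HasFPowerSeriesOnBall f (cauchyPowerSeries f 0 Rc) 0 Rc :=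
    hdiff.hasFPowerSeriesOnBall (by rw [← NNReal.coe_pos]; show (0:ℝ) < (1+b)/2; linarith)
  set p := cauchyPowerSeries f 0 Rc with hp
  set r' : NNReal := ⟨(3+b)/4, by positivity⟩ with hr'
  have hr'1 : (1:ℝ) < (r' : ℝ) := by show (1:ℝ) < (3+b)/4; linarith
  have hr'R : (r' : ENNReal) < (Rc : ENNReal) := by
    rw [ENNReal.coe_lt_coe, ← NNReal.coe_lt_coe]
    show (3+b)/4 < (1+b)/2
    linarith
  have htu := hps.tendstoUniformlyOn hr'R
  rw [Metric.tendstoUniformlyOn_iff] at htu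
  obtain ⟨N, hN⟩ := Filter.eventually_atTop.mp (htu d hd0)
  refine ⟨N, fun k => p.coeff k, ?_, ?_⟩
  · have hcoeff0 := hps.coeff_zero (fun _ => 0)
    have hf0 : f 0 = 1 := by
      rw [hf]
      simp only [mul_zero, add_zero]
      exact Complex.one_cpow _
    show p.coeff 0 = 1
    unfold FormalMultilinearSeries.coeff
    rw [Subsingleton.elim (1 : Fin 0 → ℂ) (fun _ => 0), hcoeff0, hf0]
  · intro u hu
    have humem : u ∈ Metric.ball (0:ℂ) r' := by
      rw [Metric.mem_ball, dist_zero_right, hu]; exact hr'1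
    have happ := hN (N+1) (by omega) u humem
    have hpart : p.partialSum (N+1) u = ∑ k ∈ Finset.range (N+1), p.coeff k * u^k := by
      rw [FormalMultilinearSeries.partialSum]
      refine Finset.sum_congr rfl fun k _ => ?_
      rw [FormalMultilinearSeries.apply_eq_pow_smul_coeff, smul_eq_mul, mul_comm]
    rw [zero_add, hpart] at happ
    have happrox : ‖∑ k ∈ Finset.range (N+1), p.coeff k * u^k‖ ≤ ‖f u‖ + d := by
      have h5 := norm_sub_norm_le (∑ k ∈ Finset.range (N+1), p.coeff k * u^k) (f u)
      rw [dist_eq_norm, ← norm_sub_rev] at happ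
      linarith
    set V : ℂ := 1 + (β:ℂ) * u with hV
    have hVre : 0 < V.re := hbase u (by rw [hu]; exact hb1)
    have hVne : V ≠ 0 := fun h => by rw [h] at hVre; simp at hVre
    have hVnorm : 0 < ‖V‖ := norm_pos_iff.mpr hVne
    have hfnorm : ‖f u‖ = ‖V‖ ^ (-α) := by
      rw [hf]
      show ‖V ^ (-(α:ℂ))‖ = ‖V‖ ^ (-α)
      rw [Complex.norm_cpow_of_ne_zero hVne]
      simp
    have hu2 : u.re*u.re + u.im*u.im = 1 := by
      have h6 : Complex.normSq u = 1 := by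
        rw [← Complex.sq_norm, hu]; norm_num
      simpa [Complex.normSq_apply] using h6
    have hure : |u.re| ≤ 1 := by
      have h7 := Complex.abs_re_le_norm u
      rwa [hu] at h7
    have hkey : ‖1 + u‖ ≤ (1+d) * ‖V‖ := by
      have e1 : ‖1+u‖^2 = 2 + 2*u.re := by
        rw [Complex.sq_norm, Complex.normSq_apply]
        simp only [Complex.add_re, Complex.add_im, Complex.one_re, Complex.one_im]
        linear_combination hu2
      have e2 : ‖V‖^2 = 1 + 2*β*u.re + β^2 := by
        rw [Complex.sq_norm, Complex.normSq_apply, hV]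
        simp only [Complex.add_re, Complex.add_im, Complex.one_re, Complex.one_im,
          Complex.mul_re, Complex.mul_im, Complex.ofReal_re, Complex.ofReal_im]
        linear_combination (β^2) * hu2
      have hsq : ‖1+u‖^2 ≤ ((1+d) * ‖V‖)^2 := by
        rw [mul_pow, e1, e2, hβ]
        exact scalar_ineq d u.re hd0 hd14 hure
      have h8 : (0:ℝ) ≤ (1+d) * ‖V‖ := by positivity
      calc ‖1+u‖ = Real.sqrt (‖1+u‖^2) := (Real.sqrt_sq (norm_nonneg _)).symm
        _ ≤ Real.sqrt (((1+d) * ‖V‖)^2) := Real.sqrt_le_sqrt hsq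
        _ = (1+d) * ‖V‖ := Real.sqrt_sq h8
    have hfw : ‖f u‖ * ‖1+u‖ ^ α ≤ 1 + d := by
      rw [hfnorm, Real.rpow_neg (norm_nonneg V), inv_mul_eq_div,
        ← Real.div_rpow (norm_nonneg _) (norm_nonneg V)]
      calc (‖1+u‖ / ‖V‖) ^ α ≤ (1+d) ^ α := by
            apply Real.rpow_le_rpow (by positivity) _ h0
            rw [div_le_iff₀ hVnorm]
            exact hkey
        _ ≤ (1+d) ^ (1:ℝ) := Real.rpow_le_rpow_of_exponent_le (by linarith) h1
        _ = 1+d := Real.rpow_one _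
    have h2α : ‖1+u‖ ^ α ≤ 2 := by
      have h12 : ‖1+u‖ ≤ 2 := by
        calc ‖1+u‖ ≤ ‖(1:ℂ)‖ + ‖u‖ := norm_add_le _ _
          _ = 2 := by rw [norm_one, hu]; norm_num
      calc ‖1+u‖^α ≤ 2^α := Real.rpow_le_rpow (norm_nonneg _) h12 h0
        _ ≤ 2^(1:ℝ) := Real.rpow_le_rpow_of_exponent_le one_le_two h1
        _ = 2 := Real.rpow_one 2
    calc ‖∑ k ∈ Finset.range (N+1), p.coeff k * u^k‖ * ‖1+u‖^α
        ≤ (‖f u‖ + d) * ‖1+u‖^α :=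
          mul_le_mul_of_nonneg_right happrox (Real.rpow_nonneg (norm_nonneg _) α)
      _ = ‖f u‖ * ‖1+u‖^α + d * ‖1+u‖^α := by ring
      _ ≤ (1+d) + d*2 := add_le_add hfw (mul_le_mul_of_nonneg_left h2α hd0.le)
      _ ≤ 1 + ε := by linarith

lemma partB (m : ℕ) (hm : 1 ≤ m) (ε : ℝ) (hε : 0 < ε) :
    ∃ N : ℕ, ∀ n, N ≤ n → ∃ P : ℂ[X], P.Monic ∧ P.natDegree = n ∧
      ∀ z : ℂ, ‖z^m - 1‖ = 1 → ‖P.eval z‖ ≤ 1 + ε := by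
  have hm0 : (0:ℝ) < m := by exact_mod_cast hm
  have hch : ∀ r : Fin m, ∃ (K : ℕ) (c : ℕ → ℂ), c 0 = 1 ∧ ∀ u : ℂ, ‖u‖ = 1 →
      ‖∑ k ∈ Finset.range (K+1), c k * u^k‖ * ‖1+u‖ ^ ((r:ℝ)/m) ≤ 1 + ε := by
    intro r
    apply partB_weight _ (by positivity) _ ε hε
    rw [div_le_one hm0]
    exact_mod_cast r.2.le
  choose K c hc0 hcb using hch
  have hmne : m ≠ 0 := by omega
  haveI : NeZero m := ⟨hmne⟩
  set Kmax : ℕ := Finset.univ.sup K with hKmax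
  refine ⟨m * (Kmax + 1), fun n hn => ?_⟩
  set r : ℕ := n % m with hr
  set q : ℕ := n / m with hq
  have hrm : r < m := Nat.mod_lt n (by omega)
  set rf : Fin m := ⟨r, hrm⟩ with hrf
  set K0 : ℕ := K rf with hK0
  set c0 : ℕ → ℂ := c rf with hc0'
  have hK0q : K0 ≤ q := by
    have h1 : K0 ≤ Kmax := Finset.le_sup (Finset.mem_univ rf)
    have h2 : Kmax + 1 ≤ q := by
      rw [hq, Nat.le_div_iff_mul_le (by omega : 0 < m)]
      calc (Kmax+1) * m = m * (Kmax+1) := mul_comm _ _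
        _ ≤ n := hn
    omega
  -- the reversed truncation polynomial
  set T : ℂ[X] := ∑ k ∈ Finset.range (K0+1), C (c0 k) * X^(K0 - k) with hT
  have hTdeg : T.natDegree ≤ K0 := by
    rw [hT]
    refine natDegree_sum_le_of_forall_le _ _ fun k hk => ?_
    calc (C (c0 k) * X^(K0-k)).natDegree ≤ (C (c0 k)).natDegree + (X^(K0-k):ℂ[X]).natDegree :=
        natDegree_mul_le
      _ ≤ K0 := by rw [natDegree_C, natDegree_X_pow]; omega
  have hTcoeff : T.coeff K0 = 1 := by
    rw [hT, finset_sum_coeff]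
    rw [Finset.sum_eq_single 0]
    · rw [coeff_C_mul, Nat.sub_zero, coeff_X_pow, if_pos rfl, mul_one, hc0', hc0]
    · intro k hk hkne
      rw [coeff_C_mul, coeff_X_pow, if_neg, mul_zero]
      have := Finset.mem_range.mp hk
      omega
    · intro h
      exact absurd (Finset.mem_range.mpr (by omega)) h
  have hTdeg' : T.natDegree = K0 :=
    le_antisymm hTdeg (le_natDegree_of_ne_zero (by rw [hTcoeff]; exact one_ne_zero))
  have hTmonic : T.Monic := by
    rw [Polynomial.Monic, Polynomial.leadingCoeff, hTdeg', hTcoeff]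
  -- Q and P
  set Q : ℂ[X] := X^(q - K0) * T with hQ
  have hQmonic : Q.Monic := (monic_X_pow _).mul hTmonic
  have hQdeg : Q.natDegree = q := by
    rw [hQ, (monic_X_pow _).natDegree_mul hTmonic, natDegree_X_pow, hTdeg']
    omega
  have hcompmonic : (Q.comp (X^m - C 1)).Monic :=
    hQmonic.comp (monic_X_pow_sub_C (1:ℂ) hmne) (by rw [natDegree_X_pow_sub_C]; omega)
  set P : ℂ[X] := X^r * (Q.comp (X^m - C 1)) with hP
  have hPmonic : P.Monic := (monic_X_pow _).mul hcompmonic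
  have hPdeg : P.natDegree = n := by
    rw [hP, (monic_X_pow _).natDegree_mul hcompmonic, natDegree_X_pow, natDegree_comp,
      natDegree_X_pow_sub_C, hQdeg]
    show r + q * m = n
    rw [hr, hq]
    exact Nat.mod_add_div' n m
  refine ⟨P, hPmonic, hPdeg, ?_⟩
  intro z hz
  set w : ℂ := z^m - 1 with hw
  have hw1 : ‖w‖ = 1 := hz
  have hw0 : w ≠ 0 := by
    intro h; rw [h] at hw1; simp at hw1
  set u : ℂ := w⁻¹ with hu
  have huu : ‖u‖ = 1 := by rw [hu, norm_inv, hw1]; norm_num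
  have h1u : ‖1 + u‖ = ‖z‖^m := by
    have : 1 + u = u * (w + 1) := by
      rw [hu]; field_simp
    rw [this, norm_mul, huu, one_mul, hw]
    rw [sub_add_cancel, norm_pow]
  have hTeval : T.eval w = w^K0 * ∑ k ∈ Finset.range (K0+1), c0 k * u^k := by
    rw [hT, eval_finset_sum, Finset.mul_sum]
    refine Finset.sum_congr rfl fun k hk => ?_
    have hkK : k ≤ K0 := by have := Finset.mem_range.mp hk; omega
    rw [eval_mul, eval_C, eval_pow, eval_X]
    have hwk : w^(K0-k) = w^K0 * u^k := by
      rw [hu, inv_pow]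
      rw [eq_comm, mul_inv_eq_iff_eq_mul₀ (pow_ne_zero _ hw0), ← pow_add]
      congr 1
      omega
    rw [hwk]
    ring
  have hPeval : ‖P.eval z‖ = ‖z‖^r * ‖∑ k ∈ Finset.range (K0+1), c0 k * u^k‖ := by
    have hPe : P.eval z = z^r * (w^(q-K0) * (w^K0 * ∑ k ∈ Finset.range (K0+1), c0 k * u^k)) := by
      rw [hP, eval_mul, eval_pow, eval_X, eval_comp]
      simp only [eval_sub, eval_pow, eval_X, eval_C, eval_one]
      rw [← hw, hQ, eval_mul, eval_pow, eval_X, hTeval]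
    rw [hPe, norm_mul, norm_mul, norm_mul, norm_pow z, norm_pow, norm_pow, hw1, one_pow,
      one_pow, one_mul, one_mul]
  have hzr : (‖z‖:ℝ)^r = ‖1+u‖ ^ ((r:ℝ)/m) := by
    rw [h1u]
    rw [← Real.rpow_natCast ‖z‖ m, ← Real.rpow_mul (norm_nonneg z)]
    rw [show (m:ℝ) * ((r:ℝ)/m) = (r:ℝ) by field_simp]
    rw [Real.rpow_natCast]
  rw [hPeval, hzr, mul_comm]
  exact hcb rf u huu

theorem lemniscate_chebyshev_norms_tendsto_one (m : ℕ) (hm : 1 ≤ m) :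
    Filter.Tendsto
      (fun n : ℕ => sInf {r : ℝ | ∃ P : Polynomial ℂ, P.Monic ∧ P.natDegree = n ∧
        r = sSup {c : ℝ | ∃ z : ℂ, ‖z ^ m - 1‖ = 1 ∧ c = ‖P.eval z‖}})
      Filter.atTop (nhds 1) := by
  have hmne : m ≠ 0 := by omega
  set E : Set ℂ := {z | ‖z^m - 1‖ = 1} with hE
  have hE0 : ‖(0:ℂ)^m - 1‖ = 1 := by
    rw [zero_pow hmne, zero_sub, norm_neg, norm_one]
  have hEclosed : IsClosed E := by
    have hcont : Continuous fun z : ℂ => ‖z^m - 1‖ :=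
      ((continuous_pow m).sub continuous_const).norm
    exact isClosed_singleton.preimage hcont
  have hEbdd : E ⊆ Metric.closedBall 0 2 := by
    intro z hz
    rw [Metric.mem_closedBall, dist_zero_right]
    by_contra hgt
    push_neg at hgt
    have h1 : ‖z‖ ≤ ‖z‖^m := le_self_pow₀ (by linarith) hmne
    have h2 : ‖z^m‖ ≤ ‖z^m - 1‖ + ‖(1:ℂ)‖ := by
      calc ‖z^m‖ = ‖(z^m - 1) + 1‖ := by rw [sub_add_cancel]
        _ ≤ ‖z^m - 1‖ + ‖(1:ℂ)‖ := norm_add_le _ _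
    rw [hz, norm_one, norm_pow] at h2
    linarith
  have hEcpt : IsCompact E :=
    Metric.isCompact_of_isClosed_isBounded hEclosed
      (Bornology.IsBounded.subset (Metric.isBounded_closedBall) hEbdd)
  have himg : ∀ P : ℂ[X], {c : ℝ | ∃ z : ℂ, ‖z ^ m - 1‖ = 1 ∧ c = ‖P.eval z‖}
      = (fun z => ‖P.eval z‖) '' E := by
    intro P
    ext x
    constructor
    · rintro ⟨z, h1, h2⟩; exact ⟨z, h1, h2.symm⟩
    · rintro ⟨z, h1, h2⟩; exact ⟨z, h1, h2.symm⟩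
  set S : ℂ[X] → ℝ := fun P => sSup {c : ℝ | ∃ z : ℂ, ‖z ^ m - 1‖ = 1 ∧ c = ‖P.eval z‖}
    with hS
  have hbdd : ∀ P : ℂ[X], BddAbove {c : ℝ | ∃ z : ℂ, ‖z ^ m - 1‖ = 1 ∧ c = ‖P.eval z‖} := by
    intro P
    rw [himg P]
    exact (hEcpt.image (Polynomial.continuous P).norm).bddAbove
  have hne : ∀ P : ℂ[X], {c : ℝ | ∃ z : ℂ, ‖z ^ m - 1‖ = 1 ∧ c = ‖P.eval z‖}.Nonempty :=
    fun P => ⟨‖P.eval 0‖, ⟨0, hE0, rfl⟩⟩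
  have hleS : ∀ P : ℂ[X], ∀ z : ℂ, ‖z^m - 1‖ = 1 → ‖P.eval z‖ ≤ S P :=
    fun P z hz => le_csSup (hbdd P) ⟨z, hz, rfl⟩
  have hS0 : ∀ P : ℂ[X], 0 ≤ S P :=
    fun P => le_trans (norm_nonneg _) (hleS P 0 hE0)
  have hSle : ∀ (P : ℂ[X]) (B : ℝ), (∀ z : ℂ, ‖z^m - 1‖ = 1 → ‖P.eval z‖ ≤ B) → S P ≤ B := by
    intro P B hB
    apply csSup_le (hne P)
    rintro x ⟨z, h1, h2⟩
    rw [h2]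
    exact hB z h1
  have hTne : ∀ n : ℕ, {r : ℝ | ∃ P : Polynomial ℂ, P.Monic ∧ P.natDegree = n ∧
      r = S P}.Nonempty :=
    fun n => ⟨S (X^n), X^n, monic_X_pow n, natDegree_X_pow n, rfl⟩
  have hTbdd : ∀ n : ℕ, BddBelow {r : ℝ | ∃ P : Polynomial ℂ, P.Monic ∧ P.natDegree = n ∧
      r = S P} := by
    intro n
    refine ⟨0, ?_⟩
    rintro x ⟨P, _, _, rfl⟩
    exact hS0 P
  have hlow : ∀ n : ℕ, 1 ≤ sInf {r : ℝ | ∃ P : Polynomial ℂ, P.Monic ∧ P.natDegree = n ∧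
      r = S P} := by
    intro n
    apply le_csInf (hTne n)
    rintro x ⟨P, hPm, hPd, rfl⟩
    exact partA m hm P hPm (S P) (hS0 P) (hleS P)
  rw [Metric.tendsto_atTop]
  intro ε hε
  obtain ⟨N, hN⟩ := partB m hm (ε/2) (by linarith)
  refine ⟨N, fun n hn => ?_⟩
  obtain ⟨P, hPm, hPd, hPb⟩ := hN n hn
  have hup : sInf {r : ℝ | ∃ P : Polynomial ℂ, P.Monic ∧ P.natDegree = n ∧ r = S P}
      ≤ 1 + ε/2 := by
    refine le_trans (csInf_le (hTbdd n) ⟨P, hPm, hPd, rfl⟩) ?_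
    exact hSle P _ hPb
  have hlo := hlow n
  show dist (sInf {r : ℝ | ∃ P : Polynomial ℂ, P.Monic ∧ P.natDegree = n ∧ r = S P}) 1 < ε
  rw [Real.dist_eq, _root_.abs_of_nonneg (by linarith)]
  linarith
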